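/- For any real p ≥ 2, any i ≥ 1, and nonzero vectors a₁,…,aᵢ ∈ ℝ^d, the online sensitivity sup_{x: Aᵢx ≠ 0} |aᵢᵀx|^p / Σ_{j=1}^{i} |aⱼᵀx|^p is at most min{1, i^{p/2-1} (aᵢᵀ(AᵢᵀAᵢ)⁺ aᵢ)^{p/2}}, where Aᵢ is the i×d matrix with rows a₁ᵀ,…,aᵢᵀ. -/

import Mathlib

open Matrix

/-- The four Moore–Penrose conditions characterizing the pseudoinverse. -/
def IsMoorePenroseInv {d : ℕ} (A B : Matrix (Fin d) (Fin d) ℝ) : Prop :=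
  A * B * A = A ∧ B * A * B = B ∧ (A * B)ᵀ = A * B ∧ (B * A)ᵀ = B * A

/-- If `P` is a Moore–Penrose pseudoinverse of `AᵀA`, then `(AᵀA) P Aᵀ = Aᵀ`. -/
lemma mp_fix {m d : ℕ} (A : Matrix (Fin m) (Fin d) ℝ) (P : Matrix (Fin d) (Fin d) ℝ)
    (hP : IsMoorePenroseInv (Aᵀ * A) P) : (Aᵀ * A) * P * Aᵀ = Aᵀ := by
  obtain ⟨h1, h2, h3, h4⟩ := hP
  set M : Matrix (Fin d) (Fin d) ℝ := Aᵀ * A with hM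
  set N : Matrix (Fin d) (Fin m) ℝ := Aᵀ - M * P * Aᵀ with hN
  have hNT : Nᵀ = A - A * (M * P) := by
    rw [hN, Matrix.transpose_sub, Matrix.transpose_mul, h3]
    simp
  have hNN : Nᵀ * N = A * Aᵀ - A * M * P * Aᵀ := by
    rw [hNT, hN, Matrix.sub_mul, Matrix.mul_sub, Matrix.mul_sub]
    have h1' : A * (M * P) * (M * P * Aᵀ) = A * M * P * Aᵀ := by
      have : A * (M * P) * (M * P * Aᵀ) = A * (M * P * M) * P * Aᵀ := by
        simp only [Matrix.mul_assoc]
      rw [this, h1]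
    rw [h1']
    have : A * (M * P * Aᵀ) = A * M * P * Aᵀ := by simp only [Matrix.mul_assoc]
    rw [this]
    have h2' : A * (M * P) * Aᵀ = A * M * P * Aᵀ := by simp only [Matrix.mul_assoc]
    rw [h2']
    abel
  have htr : Matrix.trace (Nᵀ * N) = 0 := by
    rw [hNN, Matrix.trace_sub]
    have e2 : Matrix.trace (A * M * P * Aᵀ) = Matrix.trace (A * Aᵀ) := by
      rw [Matrix.trace_mul_comm (A * M * P) Aᵀ]
      have : Aᵀ * (A * M * P) = M * (M * P) := by
        rw [← Matrix.mul_assoc, ← Matrix.mul_assoc, ← hM, Matrix.mul_assoc]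
      rw [this, Matrix.trace_mul_comm M (M * P), Matrix.mul_assoc, ← Matrix.mul_assoc, h1,
        Matrix.trace_mul_comm A Aᵀ, ← hM]
    rw [e2, sub_self]
  have hzero : ∀ k l, N k l = 0 := by
    have hsum : ∑ l, ∑ k, (N k l) ^ 2 = 0 := by
      have : Matrix.trace (Nᵀ * N) = ∑ l, ∑ k, (N k l) ^ 2 := by
        simp [Matrix.trace, Matrix.diag, Matrix.mul_apply, sq]
      rw [← this, htr]
    intro k l
    have h0 : ∀ l' ∈ Finset.univ (α := Fin m), (0:ℝ) ≤ ∑ k, (N k l') ^ 2 :=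
      fun l' _ => Finset.sum_nonneg fun k _ => sq_nonneg _
    have := (Finset.sum_eq_zero_iff_of_nonneg h0).mp hsum l (Finset.mem_univ l)
    have := (Finset.sum_eq_zero_iff_of_nonneg (fun k _ => sq_nonneg (N k l))).mp this k
      (Finset.mem_univ k)
    exact (pow_eq_zero_iff (two_ne_zero)).mp this
  have hN0 : N = 0 := by ext k l; exact hzero k l
  rw [hN, sub_eq_zero] at hN0
  exact hN0.symm

lemma transpose_dot {m d : ℕ} (A : Matrix (Fin m) (Fin d) ℝ) (u : Fin m → ℝ) (v : Fin d → ℝ) :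
    (Aᵀ *ᵥ u) ⬝ᵥ v = u ⬝ᵥ (A *ᵥ v) := by
  rw [Matrix.dotProduct_mulVec, Matrix.mulVec_transpose]

/-- Online sensitivity bound: with `i = n + 1` rows `a 0, …, a (n)` (all nonzero),
`A` the `i × d` matrix of these rows and `P = (AᵀA)⁺`, the online sensitivity of
the last row is at most `min {1, i^{p/2-1} (aᵢᵀ(AᵀA)⁺aᵢ)^{p/2}}`. -/
theorem online_sensitivity_le
    {d n : ℕ} (p : ℝ) (hp : 2 ≤ p)
    (a : Fin (n + 1) → Fin d → ℝ) (ha : ∀ j, a j ≠ 0)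
    (A : Matrix (Fin (n + 1)) (Fin d) ℝ) (hA : ∀ j, A j = a j)
    (P : Matrix (Fin d) (Fin d) ℝ) (hP : IsMoorePenroseInv (Aᵀ * A) P) :
    ∀ x : Fin d → ℝ, A *ᵥ x ≠ 0 →
      |a (Fin.last n) ⬝ᵥ x| ^ p / ∑ j, |a j ⬝ᵥ x| ^ p
        ≤ min 1 (((n : ℝ) + 1) ^ (p / 2 - 1)
            * (a (Fin.last n) ⬝ᵥ (P *ᵥ a (Fin.last n))) ^ (p / 2)) := by
  intro x hx
  have hq1 : (1:ℝ) ≤ p / 2 := by linarith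
  have hq0 : (0:ℝ) ≤ p / 2 := by linarith
  set b : Fin d → ℝ := a (Fin.last n) with hb
  set y : Fin d → ℝ := P *ᵥ b with hy
  set s : ℝ := b ⬝ᵥ y with hs
  set c : ℝ := (n : ℝ) + 1 with hc
  have hcpos : (0:ℝ) < c := by positivity
  -- b is the image of the standard basis vector under Aᵀ
  have he : Aᵀ *ᵥ Pi.single (Fin.last n) 1 = b := by
    rw [Matrix.mulVec_single]
    funext k
    simp [Matrix.transpose_apply, hA, hb]
  have hMy : (Aᵀ * A) *ᵥ y = b := by
    have h0 := congrArg (fun B : Matrix (Fin d) (Fin (n+1)) ℝ =>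
      B *ᵥ Pi.single (Fin.last n) 1) (mp_fix A P hP)
    rw [← Matrix.mulVec_mulVec, he, ← Matrix.mulVec_mulVec, ← hy] at h0
    exact h0
  set z : Fin (n + 1) → ℝ := A *ᵥ y with hz
  have hAtz : Aᵀ *ᵥ z = b := by rw [hz, Matrix.mulVec_mulVec, hMy]
  have hbdot : ∀ v : Fin d → ℝ, b ⬝ᵥ v = z ⬝ᵥ (A *ᵥ v) := by
    intro v; rw [← hAtz, transpose_dot]
  have hs_eq : s = z ⬝ᵥ z := by rw [hs, hbdot y, ← hz]
  have hs_nonneg : 0 ≤ s := by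
    rw [hs_eq]
    exact Finset.sum_nonneg fun j _ => mul_self_nonneg _
  -- abbreviations
  set w : Fin (n + 1) → ℝ := A *ᵥ x with hw
  have hwj : ∀ j, w j = a j ⬝ᵥ x := by intro j; rw [hw]; show A j ⬝ᵥ x = _; rw [hA]
  -- Cauchy–Schwarz
  have hCS : (b ⬝ᵥ x) ^ 2 ≤ s * ∑ j, (a j ⬝ᵥ x) ^ 2 := by
    rw [hbdot x, ← hw, hs_eq]
    have h1 := Finset.sum_mul_sq_le_sq_mul_sq Finset.univ z w
    have e1 : z ⬝ᵥ w = ∑ j, z j * w j := rfl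
    have e2 : z ⬝ᵥ z = ∑ j, z j ^ 2 := by simp [dotProduct, sq]
    rw [e1, e2]
    refine h1.trans_eq ?_
    congr 1
    exact Finset.sum_congr rfl fun j _ => by rw [hwj]
  -- each |a j ⬝ x|^p as ((a j ⬝ x)^2)^(p/2)
  have hterm : ∀ u : ℝ, ((u ^ 2) : ℝ) ^ (p / 2) = |u| ^ p := by
    intro u
    rw [← sq_abs, ← Real.rpow_natCast |u| 2, ← Real.rpow_mul (abs_nonneg u)]
    norm_num
    congr 1
    ring
  -- power mean inequality
  set t : Fin (n + 1) → ℝ := fun j => (a j ⬝ᵥ x) ^ 2 with ht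
  have ht0 : ∀ j ∈ Finset.univ (α := Fin (n+1)), (0:ℝ) ≤ t j := fun j _ => sq_nonneg _
  have hpm : (∑ j, t j) ^ (p / 2) ≤ c ^ (p / 2 - 1) * ∑ j, t j ^ (p / 2) := by
    have key := Real.rpow_arith_mean_le_arith_mean_rpow Finset.univ (fun _ => 1 / c) t
      (fun _ _ => by positivity)
      (by simp [Finset.sum_const, Finset.card_univ]; field_simp [hc]; exact hc.symm)
      ht0 hq1
    rw [← Finset.mul_sum, ← Finset.mul_sum,
      Real.mul_rpow (by positivity) (Finset.sum_nonneg ht0)] at key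
    have hT0 : (0:ℝ) ≤ ∑ j, t j := Finset.sum_nonneg ht0
    calc (∑ j, t j) ^ (p / 2)
        = c ^ (p/2) * ((1 / c) ^ (p/2) * (∑ j, t j) ^ (p/2)) := by
          rw [← mul_assoc, ← Real.mul_rpow hcpos.le (by positivity),
            mul_one_div_cancel hcpos.ne', Real.one_rpow, one_mul]
      _ ≤ c ^ (p/2) * ((1 / c) * ∑ j, t j ^ (p/2)) :=
          mul_le_mul_of_nonneg_left key (Real.rpow_nonneg hcpos.le _)
      _ = c ^ (p/2 - 1) * ∑ j, t j ^ (p/2) := by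
          rw [Real.rpow_sub hcpos, Real.rpow_one]
          field_simp
  -- combine
  set Sp : ℝ := ∑ j, |a j ⬝ᵥ x| ^ p with hSp
  have hSp_pos : 0 < Sp := by
    obtain ⟨j, hj⟩ := Function.ne_iff.mp hx
    rw [hSp]
    refine Finset.sum_pos' (fun j _ => Real.rpow_nonneg (abs_nonneg _) p) ⟨j, Finset.mem_univ j, ?_⟩
    have hj' : a j ⬝ᵥ x ≠ 0 := by rw [← hwj j]; exact hj
    exact Real.rpow_pos_of_pos (abs_pos.mpr hj') p
  have hmain : |b ⬝ᵥ x| ^ p ≤ c ^ (p/2 - 1) * s ^ (p/2) * Sp := by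
    calc |b ⬝ᵥ x| ^ p = ((b ⬝ᵥ x) ^ 2) ^ (p/2) := (hterm _).symm
      _ ≤ (s * ∑ j, t j) ^ (p/2) := Real.rpow_le_rpow (sq_nonneg _) hCS hq0
      _ = s ^ (p/2) * (∑ j, t j) ^ (p/2) :=
          Real.mul_rpow hs_nonneg (Finset.sum_nonneg ht0)
      _ ≤ s ^ (p/2) * (c ^ (p/2 - 1) * ∑ j, t j ^ (p/2)) :=
          mul_le_mul_of_nonneg_left hpm (Real.rpow_nonneg hs_nonneg _)
      _ = c ^ (p/2 - 1) * s ^ (p/2) * ∑ j, t j ^ (p/2) := by ring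
      _ = c ^ (p/2 - 1) * s ^ (p/2) * Sp := by
          rw [hSp]; congr 1; exact Finset.sum_congr rfl fun j _ => hterm _
  refine le_min ?_ ?_
  · rw [div_le_one hSp_pos, hSp]
    exact Finset.single_le_sum (f := fun j => |a j ⬝ᵥ x| ^ p)
      (fun j _ => Real.rpow_nonneg (abs_nonneg _) p) (Finset.mem_univ (Fin.last n))
  · rw [div_le_iff₀ hSp_pos]
    exact hmain
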